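/- Let R be an associative ring and M a finitely generated left R-module, and let S = Hom_R(M,M)^op. Then the monad T_M : X ↦ Hom_R(M, M^{(X)}) on the category of sets is naturally isomorphic to the monad T_S : X ↦ S[X] sending a set X to the free left S-module on X; in particular, Hom_R(M, M^{(X)}) ≅ Hom_R(M,M)^{(X)} for every set X. -/

import Mathlib

universe u v

/-- For a finitely generated left module `M` over an associative ring `R`, the canonical
map `⊕_{x ∈ X} Hom_R(M,M) → Hom_R(M, M^{(X)})` is bijective for every set `X`; thus the
monad `X ↦ Hom_R(M, M^{(X)})` on the category of sets is naturally isomorphic to the monad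
`X ↦ S[X]` of free modules over `S = Hom_R(M,M)^op`, i.e.
`Hom_R(M, M^{(X)}) ≅ Hom_R(M,M)^{(X)}`. -/
theorem homIntoFinsuppCopower_bijective_of_finite
    {R : Type u} [Ring R] {M : Type u} [AddCommGroup M] [Module R M]
    (hM : Module.Finite R M) (X : Type v) :
    Function.Bijective (fun f : X →₀ (M →ₗ[R] M) =>
      f.sum fun x g => (Finsupp.lsingle x : M →ₗ[R] (X →₀ M)).comp g) := by
  classical
  set Φ : (X →₀ (M →ₗ[R] M)) → (M →ₗ[R] (X →₀ M)) := fun f =>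
    f.sum fun x g => (Finsupp.lsingle x : M →ₗ[R] (X →₀ M)).comp g with hΦ
  have key : ∀ (f : X →₀ (M →ₗ[R] M)) (m : M) (x : X), (Φ f) m x = f x m := by
    intro f m x
    rw [hΦ]
    simp only [Finsupp.sum]
    rw [LinearMap.coe_sum, Finset.sum_apply, Finsupp.finset_sum_apply]
    simp only [LinearMap.comp_apply, Finsupp.lsingle_apply, Finsupp.single_apply]
    rw [Finset.sum_ite_eq' f.support x (fun x' => f x' m)]
    split
    · rfl
    · next h => rw [Finsupp.notMem_support_iff.mp h]; rfl
  constructor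
  · intro f₁ f₂ h
    ext x m
    have := key f₁ m x
    rw [h, key f₂ m x] at this
    exact this.symm
  · intro f
    obtain ⟨s, hs⟩ := hM.fg_top
    set T : Finset X := s.sup fun m => (f m).support with hT
    have hsub : ∀ m : M, (f m).support ⊆ T := by
      intro m
      have hm : m ∈ Submodule.span R (s : Set M) := hs ▸ Submodule.mem_top
      induction hm using Submodule.span_induction with
      | mem y hy => exact Finset.le_sup (f := fun m => (f m).support) (by exact_mod_cast hy)
      | zero => simp
      | add y z _ _ hy hz =>
          rw [map_add]
          exact (Finsupp.support_add).trans (Finset.union_subset hy hz)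
      | smul r y _ hy =>
          rw [map_smul]
          exact (Finsupp.support_smul).trans hy
    refine ⟨Finsupp.onFinset T (fun x => (Finsupp.lapply x : (X →₀ M) →ₗ[R] M).comp f) ?_, ?_⟩
    · intro x hx
      obtain ⟨m, hm⟩ : ∃ m : M, f m x ≠ 0 := by
        by_contra h
        push_neg at h
        exact hx (by ext m; exact h m)
      exact hsub m (Finsupp.mem_support_iff.mpr hm)
    · ext m x
      rw [key]
      simp [Finsupp.lapply]
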